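/- Let ν > 0 and define σ_0^(G,ν) = 1 and σ_j^(G,ν) = (2j + 2ν − 1) Γ(j + 2ν − 1) / ( Γ(2ν) Γ(j+1) ) for j ≥ 1. Then for every n ∈ ℕ, Σ_{j=0}^n σ_j^(G,ν) = (2n + 2ν) Γ(n + 2ν) / ( Γ(2ν + 1) Γ(n+1) ); consequently, with τ_n^(G,ν) = Γ(2ν+1) Γ(n+1) / ( (2n+2ν) Γ(n+2ν) ), the Gegenbauer summation weights σ_{n,k}^(G,ν) = τ_n^(G,ν) σ_{n−k}^(G,ν) form a regular Nörlund summation method, and its normalization constant N_n^(G,ν) = τ_n^(G,ν) Σ_{k=0}^n 1/τ_k^(G,ν) equals (2n+2ν+1)(n+2ν) / ( (2n+2ν)(2ν+1) ). -/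

import Mathlib

open Filter MeasureTheory

set_option maxHeartbeats 1000000 in
theorem stmt12 (ν : ℝ) (hν : 0 < ν)
    (σG : ℕ → ℝ) (hσG0 : σG 0 = 1)
    (hσG : ∀ j : ℕ, 1 ≤ j → σG j =
      (2*(j:ℝ)+2*ν-1) * Real.Gamma ((j:ℝ)+2*ν-1) /
        (Real.Gamma (2*ν) * Real.Gamma ((j:ℝ)+1)))
    (τG : ℕ → ℝ) (hτG : ∀ n : ℕ, τG n =
      Real.Gamma (2*ν+1) * Real.Gamma ((n:ℝ)+1) /
        ((2*(n:ℝ)+2*ν) * Real.Gamma ((n:ℝ)+2*ν)))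
    :
    (∀ n : ℕ, ∑ j ∈ Finset.range (n+1), σG j =
      (2*(n:ℝ)+2*ν) * Real.Gamma ((n:ℝ)+2*ν) / (Real.Gamma (2*ν+1) * Real.Gamma ((n:ℝ)+1))) ∧
    (∀ n k : ℕ, k ≤ n → 0 ≤ τG n * σG (n-k)) ∧
    (∀ n : ℕ, ∑ k ∈ Finset.range (n+1), τG n * σG (n-k) = 1) ∧
    (∀ k : ℕ, Filter.Tendsto (fun n => τG n * σG (n-k)) Filter.atTop (nhds 0)) ∧
    (∀ n : ℕ, τG n * ∑ k ∈ Finset.range (n+1), (τG k)⁻¹ =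
      (2*(n:ℝ)+2*ν+1)*((n:ℝ)+2*ν) / ((2*(n:ℝ)+2*ν)*(2*ν+1))) := by
  have h2ν : (0:ℝ) < 2*ν := by linarith
  have hΓ2ν : 0 < Real.Gamma (2*ν) := Real.Gamma_pos_of_pos h2ν
  have hΓ2ν1 : Real.Gamma (2*ν+1) = 2*ν * Real.Gamma (2*ν) :=
    Real.Gamma_add_one (ne_of_gt h2ν)
  have hΓ2ν1pos : 0 < Real.Gamma (2*ν+1) := Real.Gamma_pos_of_pos (by linarith)
  have hΓn1 : ∀ n : ℕ, 0 < Real.Gamma ((n:ℝ)+1) := fun n =>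
    Real.Gamma_pos_of_pos (by positivity)
  have hΓn2ν : ∀ n : ℕ, 0 < Real.Gamma ((n:ℝ)+2*ν) := fun n =>
    Real.Gamma_pos_of_pos (by positivity)
  have hΓstep : ∀ n : ℕ, Real.Gamma (((n:ℝ)+1)+2*ν) = ((n:ℝ)+2*ν) * Real.Gamma ((n:ℝ)+2*ν) := by
    intro n
    have : ((n:ℝ)+1)+2*ν = ((n:ℝ)+2*ν)+1 := by ring
    rw [this, Real.Gamma_add_one (by positivity)]
  have hΓstep1 : ∀ n : ℕ, Real.Gamma (((n:ℝ)+1)+1) = ((n:ℝ)+1) * Real.Gamma ((n:ℝ)+1) := by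
    intro n
    exact Real.Gamma_add_one (by positivity)
  have hσpos : ∀ j : ℕ, 0 < σG j := by
    intro j
    rcases Nat.eq_zero_or_pos j with h | h
    · rw [h, hσG0]; norm_num
    · rw [hσG j h]
      have hj : (1:ℝ) ≤ (j:ℝ) := by exact_mod_cast h
      have h1 : (0:ℝ) < 2*(j:ℝ)+2*ν-1 := by linarith
      have h2 : (0:ℝ) < Real.Gamma ((j:ℝ)+2*ν-1) := Real.Gamma_pos_of_pos (by linarith)
      have h3 := hΓn1 j
      positivity
  have hτpos : ∀ n : ℕ, 0 < τG n := by
    intro n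
    rw [hτG n]
    have h1 := hΓn1 n
    have h2 := hΓn2ν n
    have h3 : (0:ℝ) < 2*(n:ℝ)+2*ν := by positivity
    positivity
  -- Part 1 : sum formula
  have hS : ∀ n : ℕ, ∑ j ∈ Finset.range (n+1), σG j =
      (2*(n:ℝ)+2*ν) * Real.Gamma ((n:ℝ)+2*ν) / (Real.Gamma (2*ν+1) * Real.Gamma ((n:ℝ)+1)) := by
    intro n
    induction n with
    | zero =>
      simp only [Finset.sum_range_one, hσG0, Nat.cast_zero, zero_add, Real.Gamma_one, mul_one,
        hΓ2ν1]
      field_simp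
      ring
    | succ n ih =>
      rw [Finset.sum_range_succ, ih, hσG (n+1) (Nat.le_add_left 1 n)]
      push_cast
      rw [hΓstep n, hΓstep1 n, hΓ2ν1]
      have e : (n:ℝ)+1+2*ν-1 = (n:ℝ)+2*ν := by ring
      rw [e]
      have h1 := (hΓn1 n).ne'
      have h2 := (hΓn2ν n).ne'
      have h3 := hΓ2ν.ne'
      have h4 : ((n:ℝ)+1) ≠ 0 := by positivity
      field_simp
      ring
  refine ⟨hS, ?_, ?_, ?_, ?_⟩
  · intro n k _
    exact le_of_lt (mul_pos (hτpos n) (hσpos (n-k)))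
  · -- row sums equal 1
    intro n
    rw [← Finset.mul_sum]
    have hrefl : ∑ k ∈ Finset.range (n+1), σG (n-k) = ∑ j ∈ Finset.range (n+1), σG j := by
      have := Finset.sum_range_reflect (fun j => σG j) (n+1)
      simpa using this
    rw [hrefl, hS n, hτG n]
    have h1 := (hΓn1 n).ne'
    have h2 := (hΓn2ν n).ne'
    have h3 := hΓ2ν1pos.ne'
    have h4 : (2*(n:ℝ)+2*ν) ≠ 0 := by positivity
    field_simp
  · -- regularity: columns tend to 0
    intro k
    set S : ℕ → ℝ := fun n => ∑ j ∈ Finset.range (n+1), σG j with hSdef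
    have hSpos : ∀ n, 0 < S n := by
      intro n
      apply Finset.sum_pos (fun j _ => hσpos j)
      exact ⟨0, Finset.mem_range.2 (Nat.succ_pos n)⟩
    have hτinv : ∀ n, τG n = (S n)⁻¹ := by
      intro n
      rw [hSdef]
      simp only
      rw [hS n, hτG n, inv_div]
    have hSmono : ∀ m n : ℕ, m ≤ n → S m ≤ S n := by
      intro m n hmn
      apply Finset.sum_le_sum_of_subset_of_nonneg
      · exact Finset.range_subset_range.2 (by omega)
      · intro i _ _; exact (hσpos i).le
    apply squeeze_zero' (g := fun n : ℕ => 2*ν / ((n:ℝ) - k - 1))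
    · filter_upwards with n
      exact le_of_lt (mul_pos (hτpos n) (hσpos (n-k)))
    · filter_upwards [Filter.eventually_atTop.2 ⟨k+2, fun n hn => hn⟩] with n hn
      have hj1 : 1 ≤ n - k := by omega
      have hj2 : 2 ≤ n - k := by omega
      have hkn : k ≤ n := by omega
      have hjcast : ((n - k : ℕ) : ℝ) = (n:ℝ) - k := by
        push_cast [hkn]; ring
      set j := n - k with hjdef
      have hjR : (2:ℝ) ≤ (j:ℝ) := by exact_mod_cast hj2
      have step1 : τG n * σG j ≤ σG j / S j := by
        rw [hτinv n, inv_mul_eq_div, div_le_div_iff₀ (hSpos n) (hSpos j)]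
        have hle : S j ≤ S n := hSmono j n (by omega)
        nlinarith [hσpos j, hSpos j, hSpos n]
      have hΓj := Real.Gamma_add_one (s := (j:ℝ)+2*ν-1) (by nlinarith)
      rw [show ((j:ℝ)+2*ν-1)+1 = (j:ℝ)+2*ν by ring] at hΓj
      have hratio : σG j / S j = 2*ν*(2*(j:ℝ)+2*ν-1) / ((2*(j:ℝ)+2*ν)*((j:ℝ)+2*ν-1)) := by
        rw [hσG j hj1, hSdef]
        simp only
        rw [hS j, hΓj, hΓ2ν1]
        have h1 := (hΓn1 j).ne'
        have h2 : Real.Gamma ((j:ℝ)+2*ν-1) ≠ 0 := (Real.Gamma_pos_of_pos (by nlinarith)).ne'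
        have h3 := hΓ2ν.ne'
        have h4 : (2*(j:ℝ)+2*ν) ≠ 0 := by nlinarith
        have h5 : ((j:ℝ)+2*ν-1) ≠ 0 := by nlinarith
        field_simp
      have step2 : σG j / S j ≤ 2*ν / ((j:ℝ) - 1) := by
        rw [hratio, div_le_div_iff₀ (by nlinarith) (by nlinarith)]
        nlinarith [h2ν, hjR, mul_pos (mul_pos h2ν h2ν) (show (0:ℝ) < (j:ℝ) by linarith),
          mul_pos h2ν (show (0:ℝ) < (j:ℝ)-1 by linarith), mul_pos h2ν h2ν]
      have : (j:ℝ) - 1 = (n:ℝ) - k - 1 := by rw [← hjcast]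
      calc τG n * σG j ≤ σG j / S j := step1
        _ ≤ 2*ν / ((j:ℝ) - 1) := step2
        _ = 2*ν / ((n:ℝ) - k - 1) := by rw [this]
    · apply Filter.Tendsto.div_atTop tendsto_const_nhds
      have h1 : Filter.Tendsto (fun n : ℕ => (n:ℝ)) atTop atTop := tendsto_natCast_atTop_atTop
      have h2 := tendsto_atTop_add_const_right atTop (-(k:ℝ)) h1
      have h3 := tendsto_atTop_add_const_right atTop (-1 : ℝ) h2
      simp only [sub_eq_add_neg]
      exact h3
  · -- normalization constant
    intro n
    have hτinv' : ∀ m : ℕ, (τG m)⁻¹ =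
        (2*(m:ℝ)+2*ν) * Real.Gamma ((m:ℝ)+2*ν) / (Real.Gamma (2*ν+1) * Real.Gamma ((m:ℝ)+1)) := by
      intro m
      rw [hτG m, inv_div]
    have hT : ∀ n : ℕ, ∑ k ∈ Finset.range (n+1), (τG k)⁻¹ =
        (2*(n:ℝ)+2*ν+1)*((n:ℝ)+2*ν) * Real.Gamma ((n:ℝ)+2*ν) /
          ((2*ν+1) * Real.Gamma (2*ν+1) * Real.Gamma ((n:ℝ)+1)) := by
      intro n
      induction n with
      | zero =>
        simp only [Finset.sum_range_one, hτinv' 0, Nat.cast_zero, zero_add, Real.Gamma_one,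
          mul_one, hΓ2ν1]
        have h3 := hΓ2ν.ne'
        have h5 : (2*ν+1) ≠ 0 := by positivity
        field_simp
        ring
      | succ n ih =>
        rw [Finset.sum_range_succ, ih, hτinv' (n+1)]
        push_cast
        rw [hΓstep n, hΓstep1 n]
        have h1 := (hΓn1 n).ne'
        have h2 := (hΓn2ν n).ne'
        have h3 := hΓ2ν1pos.ne'
        have h4 : ((n:ℝ)+1) ≠ 0 := by positivity
        have h5 : (2*ν+1) ≠ 0 := by positivity
        field_simp
        ring
    rw [hT n, hτG n]
    have h1 := (hΓn1 n).ne'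
    have h2 := (hΓn2ν n).ne'
    have h3 := hΓ2ν1pos.ne'
    have h4 : (2*(n:ℝ)+2*ν) ≠ 0 := by positivity
    have h5 : (2*ν+1) ≠ 0 := by positivity
    field_simp
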